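/- Let α > 0 be real and z, λ ∈ ℂ. For q ≥ 1 let D_q denote the determinant of the q×q upper-Hessenberg matrix M^{(q)} with entries M_{j,k} := z·(1/k)·C(k, j−1)·α^{k−j+1} − λ·[j = k] for j ≤ k, M_{j+1,j} := z/j on the subdiagonal, and 0 below the subdiagonal, and set D_0 := 1. Then for every q ≥ 1 the difference equation λ·D_{q−1} + Σ_{j=0}^{q} ((−αz)^j / j!)·D_{q−j} = 0 holds. -/

import Mathlib

open Finset

/-- The q×q upper-Hessenberg matrix `M^{(q)}` (1-based indices `J = j+1`, `K = k+1`):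
`M_{J,K} = z·(1/K)·C(K,J−1)·α^{K−J+1} − λ·[J=K]` for `J ≤ K`, `M_{K+1,K} = z/K` on the
subdiagonal, and `0` below the subdiagonal. -/
noncomputable def hessM (α : ℝ) (z l : ℂ) (q : ℕ) : Matrix (Fin q) (Fin q) ℂ :=
  fun j k =>
    if j.1 ≤ k.1 then
      z * (1 / ((k.1 + 1 : ℕ) : ℂ)) * ((Nat.choose (k.1 + 1) j.1 : ℕ) : ℂ)
          * (α : ℂ) ^ (k.1 + 1 - j.1)
        - (if j = k then l else 0)
    else if j.1 = k.1 + 1 then z / ((k.1 + 1 : ℕ) : ℂ)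
    else 0

/-- `D_q := det M^{(q)}`, with `D_0 = 1` (determinant of the empty matrix). -/
noncomputable def Dseq (α : ℝ) (z l : ℂ) (q : ℕ) : ℂ :=
  (hessM α z l q).det

/-- The difference equation `λ·D_{q−1} + Σ_{j=0}^{q} ((−αz)^j/j!)·D_{q−j} = 0`
for every `q ≥ 1`. -/
lemma succAbove_val {n : ℕ} (i : Fin (n+1)) (x : Fin n) :
    (i.succAbove x).1 = if x.1 < i.1 then x.1 else x.1 + 1 := by
  rw [Fin.succAbove, apply_ite Fin.val]
  simp [Fin.lt_def]

lemma hess_minor (α : ℝ) (z l : ℂ) (n : ℕ) (i : Fin (n+1)) :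
    ((hessM α z l (n+1)).submatrix i.succAbove Fin.castSucc).det
      = Dseq α z l i.1 * ∏ s ∈ range (n - i.1), (z / ((i.1 + s + 1 : ℕ) : ℂ)) := by
  obtain ⟨m, hm⟩ := i
  have hm' : m ≤ n := Nat.lt_succ_iff.mp hm
  have hnm : m + (n - m) = n := by omega
  let E : Fin m ⊕ Fin (n - m) ≃ Fin n := finSumFinEquiv.trans (finCongr hnm)
  rw [← Matrix.det_submatrix_equiv_self E, Matrix.submatrix_submatrix]
  set S := (hessM α z l (n+1)).submatrix ((⟨m, hm⟩ : Fin (n+1)).succAbove ∘ E) (Fin.castSucc ∘ E)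
    with hS
  have hEl : ∀ r : Fin m, (E (Sum.inl r)).1 = r.1 := fun r => rfl
  have hEr : ∀ s : Fin (n-m), (E (Sum.inr s)).1 = m + s.1 := fun s => rfl
  have hrowl : ∀ r : Fin m, (((⟨m, hm⟩ : Fin (n+1)).succAbove) (E (Sum.inl r))).1 = r.1 := by
    intro r
    rw [succAbove_val, hEl]
    simp [r.isLt]
  have hrowr : ∀ s : Fin (n-m),
      (((⟨m, hm⟩ : Fin (n+1)).succAbove) (E (Sum.inr s))).1 = m + s.1 + 1 := by
    intro s
    rw [succAbove_val, hEr]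
    simp
  have h21 : S.toBlocks₂₁ = 0 := by
    ext s c
    simp only [Matrix.toBlocks₂₁, Matrix.of_apply, hS, Matrix.submatrix_apply,
      Function.comp_apply, hessM, Matrix.zero_apply]
    rw [hrowr s]
    have hc : ((E (Sum.inl c)).castSucc).1 = c.1 := hEl c
    rw [hc]
    have h1 := c.isLt
    have h2 := s.isLt
    split_ifs <;> first | rfl | (exfalso; omega)
  have h11 : S.toBlocks₁₁ = hessM α z l m := by
    ext r c
    simp only [Matrix.toBlocks₁₁, Matrix.of_apply, hS, Matrix.submatrix_apply,
      Function.comp_apply, hessM]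
    have hr := hrowl r
    have hc : ((E (Sum.inl c)).castSucc).1 = c.1 := hEl c
    simp only [Fin.ext_iff, hr, hc]
  rw [← Matrix.fromBlocks_toBlocks S, h21, h11, Matrix.det_fromBlocks_zero₂₁]
  have h22 : S.toBlocks₂₂.det = ∏ s ∈ range (n - m), (z / ((m + s + 1 : ℕ) : ℂ)) := by
    have htri : S.toBlocks₂₂.BlockTriangular id := by
      intro s t hst
      simp only [id] at hst
      simp only [Matrix.toBlocks₂₂, Matrix.of_apply, hS, Matrix.submatrix_apply,
        Function.comp_apply, hessM]
      rw [hrowr s]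
      have hc : ((E (Sum.inr t)).castSucc).1 = m + t.1 := hEr t
      rw [hc]
      have : t.1 < s.1 := hst
      split_ifs <;> first | rfl | (exfalso; omega)
    have hdiag : ∀ s : Fin (n - m), S.toBlocks₂₂ s s = z / ((m + s.1 + 1 : ℕ) : ℂ) := by
      intro s
      simp only [Matrix.toBlocks₂₂, Matrix.of_apply, hS, Matrix.submatrix_apply,
        Function.comp_apply, hessM]
      rw [hrowr s]
      have hc : ((E (Sum.inr s)).castSucc).1 = m + s.1 := hEr s
      rw [hc]
      split_ifs <;> first | rfl | (exfalso; omega)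
    rw [Matrix.det_of_upperTriangular htri]
    calc ∏ s : Fin (n - m), S.toBlocks₂₂ s s
        = ∏ s : Fin (n - m), (fun t : ℕ => z / ((m + t + 1 : ℕ) : ℂ)) s.1 :=
          Finset.prod_congr rfl (fun s _ => hdiag s)
      _ = ∏ s ∈ range (n - m), z / ((m + s + 1 : ℕ) : ℂ) :=
          Fin.prod_univ_eq_prod_range (fun t : ℕ => z / ((m + t + 1 : ℕ) : ℂ)) (n - m)
  rw [h22]
  rfl

lemma prod_formula (z : ℂ) (m k : ℕ) :
    ∏ s ∈ range k, (z / ((m + s + 1 : ℕ) : ℂ))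
      = z ^ k * (m.factorial : ℂ) / ((m + k).factorial : ℂ) := by
  induction k with
  | zero =>
      have h : (m.factorial : ℂ) ≠ 0 := Nat.cast_ne_zero.mpr m.factorial_ne_zero
      simp [div_self h]
  | succ k ih =>
      rw [Finset.prod_range_succ, ih, show m + (k+1) = (m+k)+1 from rfl, Nat.factorial_succ]
      have h1 : ((m+k).factorial : ℂ) ≠ 0 := Nat.cast_ne_zero.mpr (Nat.factorial_ne_zero _)
      have h2 : ((m + k + 1 : ℕ) : ℂ) ≠ 0 := Nat.cast_ne_zero.mpr (by omega)
      push_cast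
      field_simp
      ring

lemma coeff_eq (α : ℝ) (z : ℂ) (i n : ℕ) (hi : i ≤ n) :
    (-1:ℂ) ^ (i + n)
        * (z * (1 / ((n + 1 : ℕ) : ℂ)) * ((Nat.choose (n+1) i : ℕ) : ℂ) * (α:ℂ) ^ (n+1-i))
        * (z ^ (n-i) * (i.factorial : ℂ) / (n.factorial : ℂ))
      = -((-((α:ℂ) * z)) ^ (n+1-i) / ((n+1-i).factorial : ℂ)) := by
  obtain ⟨k, rfl⟩ : ∃ k, n = i + k := ⟨n - i, by omega⟩
  have e1 : i + k + 1 - i = k + 1 := by omega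
  have e2 : i + k - i = k := by omega
  rw [e1, e2]
  have hsign : (-1:ℂ) ^ (i + (i + k)) = (-1) ^ k := by
    rw [show i + (i + k) = 2*i + k by ring, pow_add, pow_mul]
    norm_num
  rw [hsign, neg_pow (((α:ℂ) * z)) (k+1)]
  have hch : ((Nat.choose (i+k+1) i : ℕ) : ℂ) * (i.factorial : ℂ) * ((k+1).factorial : ℂ)
      = ((i + k + 1 : ℕ) : ℂ) * ((i+k).factorial : ℂ) := by
    have h := Nat.choose_mul_factorial_mul_factorial (show i ≤ i + k + 1 by omega)
    rw [e1] at h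
    have h2 : (i+k+1).factorial = (i+k+1) * (i+k).factorial := Nat.factorial_succ _
    rw [h2] at h
    exact_mod_cast congrArg (Nat.cast : ℕ → ℂ) h
  have h1 : ((i.factorial : ℕ) : ℂ) ≠ 0 := Nat.cast_ne_zero.mpr (Nat.factorial_ne_zero _)
  have h2 : (((i+k).factorial : ℕ) : ℂ) ≠ 0 := Nat.cast_ne_zero.mpr (Nat.factorial_ne_zero _)
  have h3 : (((k+1).factorial : ℕ) : ℂ) ≠ 0 := Nat.cast_ne_zero.mpr (Nat.factorial_ne_zero _)
  have h4 : ((i + k + 1 : ℕ) : ℂ) ≠ 0 := Nat.cast_ne_zero.mpr (by omega)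
  have hpow : (-1:ℂ) ^ (k+1) = -(-1:ℂ)^k := by rw [pow_succ]; ring
  rw [hpow]
  have hch' : ((Nat.choose (i+k+1) i : ℕ) : ℂ)
      = ((i + k + 1 : ℕ) : ℂ) * ((i+k).factorial : ℂ)
        / ((i.factorial : ℂ) * ((k+1).factorial : ℂ)) := by
    rw [eq_div_iff (mul_ne_zero h1 h3)]
    push_cast at hch ⊢
    linear_combination hch
  rw [hch']
  have h4' : ((i:ℂ) + (k:ℂ) + 1) ≠ 0 := by exact_mod_cast h4
  push_cast
  field_simp
  ring

lemma hess_entry_last (α : ℝ) (z l : ℂ) (n : ℕ) (i : Fin (n+1)) :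
    hessM α z l (n+1) i (Fin.last n)
      = z * (1 / ((n + 1 : ℕ) : ℂ)) * ((Nat.choose (n+1) i.1 : ℕ) : ℂ) * (α:ℂ) ^ (n+1-i.1)
        - (if i.1 = n then l else 0) := by
  have hi : i.1 ≤ n := Nat.lt_succ_iff.mp i.isLt
  simp only [hessM, Fin.val_last, if_pos hi, Fin.ext_iff]

lemma Dseq_expand (α : ℝ) (z l : ℂ) (n : ℕ) :
    Dseq α z l (n+1)
      = -(l * Dseq α z l n)
        + ∑ i ∈ range (n+1),
            -(((-((α:ℂ) * z)) ^ (n+1-i) / ((n+1-i).factorial : ℂ)) * Dseq α z l i) := by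
  have hstep : Dseq α z l (n+1)
      = ∑ i ∈ range (n+1),
          (-1:ℂ) ^ (i + n)
            * (z * (1 / ((n + 1 : ℕ) : ℂ)) * ((Nat.choose (n+1) i : ℕ) : ℂ)
                * (α:ℂ) ^ (n+1-i) - (if i = n then l else 0))
            * (Dseq α z l i * ∏ s ∈ range (n - i), (z / ((i + s + 1 : ℕ) : ℂ))) := by
    rw [Dseq, Matrix.det_succ_column (hessM α z l (n+1)) (Fin.last n),
      ← Fin.sum_univ_eq_sum_range (fun t : ℕ =>
          (-1:ℂ) ^ (t + n)
            * (z * (1 / ((n + 1 : ℕ) : ℂ)) * ((Nat.choose (n+1) t : ℕ) : ℂ)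
                * (α:ℂ) ^ (n+1-t) - (if t = n then l else 0))
            * (Dseq α z l t * ∏ s ∈ range (n - t), (z / ((t + s + 1 : ℕ) : ℂ)))) (n+1)]
    apply Finset.sum_congr rfl
    intro i _
    simp only [Fin.succAbove_last, Fin.val_last]
    rw [hess_entry_last, hess_minor]
  rw [hstep]
  have hterm : ∀ i ∈ range (n+1),
      (-1:ℂ) ^ (i + n)
          * (z * (1 / ((n + 1 : ℕ) : ℂ)) * ((Nat.choose (n+1) i : ℕ) : ℂ)
              * (α:ℂ) ^ (n+1-i) - (if i = n then l else 0))
          * (Dseq α z l i * ∏ s ∈ range (n - i), (z / ((i + s + 1 : ℕ) : ℂ)))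
        = -(((-((α:ℂ) * z)) ^ (n+1-i) / ((n+1-i).factorial : ℂ)) * Dseq α z l i)
          + (if i = n then -(l * Dseq α z l n) else 0) := by
    intro i hi
    have hi' : i ≤ n := Nat.lt_succ_iff.mp (mem_range.mp hi)
    rw [prod_formula z i (n-i), Nat.add_sub_cancel' hi']
    have hc := coeff_eq α z i n hi'
    by_cases hin : i = n
    · subst hin
      rw [if_pos rfl, if_pos rfl]
      have hf : (Nat.factorial i : ℂ) ≠ 0 := Nat.cast_ne_zero.mpr (Nat.factorial_ne_zero _)
      have hs : (-1:ℂ) ^ (i + i) = 1 := by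
        rw [← two_mul, pow_mul]; norm_num
      rw [Nat.sub_self, pow_zero, one_mul, div_self hf, hs]
      rw [Nat.sub_self, pow_zero, one_mul, div_self hf, hs] at hc
      linear_combination (Dseq α z l i) * hc
    · rw [if_neg hin, if_neg hin]
      linear_combination (Dseq α z l i) * hc
  rw [Finset.sum_congr rfl hterm, Finset.sum_add_distrib,
    Finset.sum_ite_eq' (range (n+1)) n (fun _ => -(l * Dseq α z l n)),
    if_pos (mem_range.mpr (Nat.lt_succ_self n))]
  ring

theorem Dseq_recursion (α : ℝ) (hα : 0 < α) (z l : ℂ) (q : ℕ) (hq : 1 ≤ q) :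
    l * Dseq α z l (q - 1)
      + ∑ j ∈ range (q + 1),
          ((-((α : ℂ) * z)) ^ j / (Nat.factorial j : ℂ)) * Dseq α z l (q - j) = 0 := by
  obtain ⟨n, rfl⟩ : ∃ n, q = n + 1 := ⟨q - 1, by omega⟩
  rw [Nat.add_sub_cancel, Finset.sum_range_succ']
  simp only [pow_zero, Nat.factorial_zero, Nat.cast_one, Nat.sub_zero, div_one, one_mul]
  have hre : ∑ j ∈ range (n+1),
      ((-((α:ℂ) * z)) ^ (j+1) / (Nat.factorial (j+1) : ℂ)) * Dseq α z l (n + 1 - (j+1))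
      = ∑ i ∈ range (n+1),
          ((-((α:ℂ) * z)) ^ (n+1-i) / ((n+1-i).factorial : ℂ)) * Dseq α z l i := by
    rw [← Finset.sum_range_reflect (fun i =>
      ((-((α:ℂ) * z)) ^ (n+1-i) / ((n+1-i).factorial : ℂ)) * Dseq α z l i) (n+1)]
    apply Finset.sum_congr rfl
    intro j hj
    have hj' : j < n + 1 := mem_range.mp hj
    rw [show n + 1 - 1 - j = n - j from rfl,
      show n + 1 - (n - j) = j + 1 from by omega,
      show n + 1 - (j + 1) = n - j from by omega]
  rw [hre, Dseq_expand α z l n, Finset.sum_neg_distrib]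
  ring
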